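/- The function f(c, p) = p/c·r + ((1 − r·p)/(1 − c·p))·(1 − p), for fixed r > 0, takes every value in (0, ∞) as (c, p) ranges over the admissible parameter set; equivalently, the map (c^n_1, c^r_1, p_1) ↦ f(c^n_1, c^r_1, p_1) = (c^r_1/c^n_1)p_1 + ((1 − c^r_1 p_1)/(1 − c^n_1 p_1))(1 − p_1) is surjective onto (0, ∞) on the domain {c^n_1, c^r_1 > 0, p_1 ∈ (0, min{1, 1/c^n_1, 1/c^r_1})}. -/

import Mathlib

/-- Surjectivity onto `(0, ∞)` of the Best Estimate component over the admissible
parameter region. -/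
theorem best_estimate_component_surjective (y : ℝ) (hy : 0 < y) :
    ∃ cn1 cr1 p1 : ℝ, 0 < cn1 ∧ 0 < cr1 ∧ 0 < p1 ∧
      p1 < min 1 (min (1 / cn1) (1 / cr1)) ∧
      cr1 / cn1 * p1 + (1 - cr1 * p1) / (1 - cn1 * p1) * (1 - p1) = y := by
  rcases lt_or_ge y 1 with h1 | h1
  · -- y < 1 : cn1 = 2/y, cr1 = (16-12y)/(y(4-2y)), p1 = y/4
    refine ⟨2 / y, (16 - 12 * y) / (y * (4 - 2 * y)), y / 4, ?_, ?_, ?_, ?_, ?_⟩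
    · positivity
    · have h2 : (0:ℝ) < 16 - 12 * y := by linarith
      have h3 : (0:ℝ) < y * (4 - 2 * y) := by nlinarith
      positivity
    · positivity
    · have h2 : (0:ℝ) < 16 - 12 * y := by linarith
      have h3 : (0:ℝ) < y * (4 - 2 * y) := by nlinarith
      refine lt_min (by linarith) (lt_min ?_ ?_)
      · have he : (1:ℝ) / (2 / y) = y / 2 := one_div_div 2 y
        rw [he]; linarith
      · rw [lt_div_iff₀ (by positivity)]
        have h42 : (4:ℝ) - 2 * y ≠ 0 := by intro h; linarith
        have heq : y / 4 * ((16 - 12 * y) / (y * (4 - 2 * y)))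
            = (4 - 3 * y) / (4 - 2 * y) := by
          field_simp; ring
        rw [heq, div_lt_one (by linarith)]; linarith
    · have hcn : 2 / y * (y / 4) = 1 / 2 := by field_simp; ring
      have h42 : (4:ℝ) - 2 * y ≠ 0 := by intro h; linarith [h1]
      field_simp
      have h42' : (4:ℝ) - y * 2 ≠ 0 := by intro h; linarith [h1]
      field_simp
      ring
  · -- 1 ≤ y : cn1 = 1 - sqrt(1 - 1/y), cr1 = 1, p1 = 1/2
    set s := Real.sqrt (1 - 1 / y) with hs
    have hle : (0:ℝ) ≤ 1 - 1 / y := by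
      have : 1 / y ≤ 1 := by
        rw [div_le_one hy]; linarith
      linarith
    have hs0 : 0 ≤ s := Real.sqrt_nonneg _
    have hs2 : s ^ 2 = 1 - 1 / y := Real.sq_sqrt hle
    have hslt : s < 1 := by
      nlinarith [one_div_pos.mpr hy]
    refine ⟨1 - s, 1, 1 / 2, by linarith, one_pos, by norm_num, ?_, ?_⟩
    · refine lt_min (by norm_num) (lt_min ?_ (by norm_num))
      rw [lt_div_iff₀ (by linarith)]
      nlinarith
    · have h1s : (1:ℝ) - s ≠ 0 := by intro h; nlinarith
      have h2s : (2:ℝ) - (1 - s) ≠ 0 := by intro h; nlinarith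
      have h2s' : (1:ℝ) - (1 - s) * (1 / 2) ≠ 0 := by intro h; nlinarith
      have hy' : y ≠ 0 := hy.ne'
      have hs2y : y * s ^ 2 = y - 1 := by rw [hs2]; field_simp
      field_simp
      ring_nf
      linear_combination 2 * hs2y
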